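/- Variance duality for the discrete Gaussian θ₃-distribution: for c > 0 let σ²(c) = ( ∑_{n∈ℤ} n² e^{-cπn²} ) / ( ∑_{n∈ℤ} e^{-cπn²} ) be the variance of the discrete Gaussian θ₃-distribution with parameter c. Then for every c > 0: c · σ²(c) + (1/c) · σ²(1/c) = 1/(2π). -/

import Mathlib

open Real

/-- The variance of the discrete Gaussian `θ₃`-distribution with parameter `c > 0`. -/
noncomputable def discreteGaussianVariance (c : ℝ) : ℝ :=
  (∑' n : ℤ, (n : ℝ) ^ 2 * Real.exp (-c * π * (n : ℝ) ^ 2)) /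
    (∑' n : ℤ, Real.exp (-c * π * (n : ℝ) ^ 2))

noncomputable def Sθ (a : ℝ) : ℝ := ∑' n : ℤ, Real.exp (-π * a * (n : ℝ) ^ 2)
noncomputable def Tθ (a : ℝ) : ℝ := ∑' n : ℤ, (n : ℝ) ^ 2 * Real.exp (-π * a * (n : ℝ) ^ 2)

lemma summable_aux (k : ℕ) {a : ℝ} (ha : 0 < a) :
    Summable (fun n : ℤ => (|(n : ℝ)| ^ k) * Real.exp (-π * a * (n : ℝ) ^ 2)) := by
  have := summable_pow_mul_jacobiTheta₂_term_bound 0 ha k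
  refine this.congr fun n => ?_
  push_cast [Int.cast_abs]
  ring_nf

lemma Sθ_summable {a : ℝ} (ha : 0 < a) :
    Summable (fun n : ℤ => Real.exp (-π * a * (n : ℝ) ^ 2)) := by
  have := summable_aux 0 ha
  simpa using this

lemma Tθ_summable {a : ℝ} (ha : 0 < a) :
    Summable (fun n : ℤ => (n : ℝ) ^ 2 * Real.exp (-π * a * (n : ℝ) ^ 2)) := by
  have := summable_aux 2 ha
  simpa [sq_abs] using this

lemma Sθ_pos {a : ℝ} (ha : 0 < a) : 0 < Sθ a := by
  refine Summable.tsum_pos (Sθ_summable ha) (fun n => (Real.exp_pos _).le) 0 ?_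
  exact Real.exp_pos _

lemma hasDerivAt_Sθ {c : ℝ} (hc : 0 < c) : HasDerivAt Sθ (-π * Tθ c) c := by
  have key : HasDerivAt (fun z => ∑' n : ℤ, Real.exp (-π * z * (n : ℝ) ^ 2))
      (∑' n : ℤ, (-π * (n : ℝ) ^ 2) * Real.exp (-π * c * (n : ℝ) ^ 2)) c := by
    refine hasDerivAt_tsum_of_isPreconnected
      (u := fun n : ℤ => π * ((n : ℝ) ^ 2 * Real.exp (-π * (c/2) * (n : ℝ) ^ 2)))
      (g' := fun (n : ℤ) (a : ℝ) => (-π * (n : ℝ) ^ 2) * Real.exp (-π * a * (n : ℝ) ^ 2))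
      (t := Set.Ioi (c/2)) ?_ isOpen_Ioi (isPreconnected_Ioi)
      ?_ ?_ (by simpa using half_lt_self hc) (Sθ_summable hc) (by simpa using half_lt_self hc)
    · exact (Tθ_summable (half_pos hc)).mul_left π
    · intro n a _
      have h2 := ((hasDerivAt_id a).const_mul (-π * (n : ℝ) ^ 2)).exp
      simp only [mul_one, id_eq] at h2
      have hfun : (fun x : ℝ => Real.exp (-π * (n:ℝ)^2 * x))
          = fun x : ℝ => Real.exp (-π * x * (n:ℝ)^2) := by
        funext x; ring_nf
      rw [hfun] at h2
      have hval : Real.exp (-π * (n:ℝ)^2 * a) * (-π * (n:ℝ)^2)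
          = (-π * (n:ℝ)^2) * Real.exp (-π * a * (n:ℝ)^2) := by ring_nf
      rw [hval] at h2
      exact h2
    · intro n a ha
      have hle : Real.exp (-π * a * (n : ℝ) ^ 2) ≤ Real.exp (-π * (c/2) * (n : ℝ) ^ 2) := by
        apply Real.exp_le_exp.2
        have : (c/2) * (n:ℝ)^2 ≤ a * (n:ℝ)^2 :=
          mul_le_mul_of_nonneg_right (le_of_lt ha) (sq_nonneg _)
        nlinarith [pi_pos]
      have : ‖(-π * (n : ℝ) ^ 2) * Real.exp (-π * a * (n : ℝ) ^ 2)‖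
          = π * (n : ℝ) ^ 2 * Real.exp (-π * a * (n : ℝ) ^ 2) := by
        rw [norm_mul, norm_mul]
        simp [abs_of_nonneg pi_pos.le, abs_of_nonneg (Real.exp_pos _).le, sq_abs]
      rw [this, mul_assoc]
      exact mul_le_mul_of_nonneg_left
        (mul_le_mul_of_nonneg_left hle (sq_nonneg _)) pi_pos.le
  have : (∑' n : ℤ, (-π * (n : ℝ) ^ 2) * Real.exp (-π * c * (n : ℝ) ^ 2)) = -π * Tθ c := by
    rw [Tθ, ← tsum_mul_left]
    exact tsum_congr fun n => by ring
  rw [← this]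
  exact key

lemma Sθ_funeq {a : ℝ} (ha : 0 < a) : Sθ a = (1 / a ^ ((1:ℝ)/2)) * Sθ a⁻¹ := by
  have := Real.tsum_exp_neg_mul_int_sq ha
  rw [Sθ, Sθ, this]
  congr 1

lemma key_identity {c : ℝ} (hc : 0 < c) :
    -π * Tθ c = (-(1/2) : ℝ) * c ^ ((-(1/2):ℝ) - 1) * Sθ c⁻¹
      + c ^ (-(1/2):ℝ) * ((-π * Tθ c⁻¹) * (-(c^2)⁻¹)) := by
  have hinv : (0:ℝ) < c⁻¹ := inv_pos.mpr hc
  have hrpow : HasDerivAt (fun a : ℝ => a ^ (-(1/2):ℝ)) ((-(1/2):ℝ) * c ^ ((-(1/2):ℝ) - 1)) c :=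
    Real.hasDerivAt_rpow_const (Or.inl hc.ne')
  have hcomp : HasDerivAt (fun a : ℝ => Sθ a⁻¹) ((-π * Tθ c⁻¹) * (-(c^2)⁻¹)) c :=
    (hasDerivAt_Sθ hinv).comp c (hasDerivAt_inv hc.ne')
  have hG := hrpow.mul hcomp
  have heq : Sθ =ᶠ[nhds c] fun a => a ^ (-(1/2):ℝ) * Sθ a⁻¹ := by
    filter_upwards [Ioi_mem_nhds hc] with a ha
    rw [Sθ_funeq ha, Real.rpow_neg (le_of_lt ha), one_div]
  exact (hasDerivAt_Sθ hc).unique (hG.congr_of_eventuallyEq heq)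

lemma dgv_eq (c : ℝ) : discreteGaussianVariance c = Tθ c / Sθ c := by
  unfold discreteGaussianVariance Tθ Sθ
  congr 1 <;> exact tsum_congr fun n => by rw [show -c * π = -π * c by ring]

/-- Variance duality for the discrete Gaussian `θ₃`-distribution. -/
theorem discreteGaussian_variance_duality (c : ℝ) (hc : 0 < c) :
    c * discreteGaussianVariance c + (1 / c) * discreteGaussianVariance (1 / c)
      = 1 / (2 * π) := by
  have hc' : (0:ℝ) < c⁻¹ := inv_pos.mpr hc
  rw [dgv_eq, one_div, dgv_eq]
  set s := c ^ ((1:ℝ)/2) with hs_def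
  have hs : 0 < s := Real.rpow_pos_of_pos hc _
  have hss : s * s = c := by
    rw [hs_def, ← Real.rpow_add hc]; norm_num
  have hS := Sθ_pos hc
  have hS' := Sθ_pos hc'
  have hE2 : Sθ c⁻¹ = s * Sθ c := by
    have h := Sθ_funeq hc
    rw [← hs_def] at h
    field_simp at h
    rw [one_div] at h
    linarith
  have hkey := key_identity hc
  have hneg : c ^ (-(1/2):ℝ) = s⁻¹ := by
    rw [Real.rpow_neg hc.le, hs_def]
  have h32 : c ^ ((-(1/2):ℝ) - 1) = (c * s)⁻¹ := by
    rw [show ((-(1/2):ℝ) - 1) = -(1 + 1/2) by norm_num, Real.rpow_neg hc.le,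
      Real.rpow_add hc, Real.rpow_one, hs_def]
  rw [hneg, h32, hE2] at hkey
  rw [hE2]
  have hπ := pi_pos
  field_simp at hkey ⊢
  simp only [one_div] at hkey ⊢
  apply mul_left_cancel₀ (show (c * s : ℝ) ≠ 0 by positivity)
  linear_combination (-(c * s)) * hkey
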